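/- arXiv:0907.5587 — 4 statements merged into one kernel-verified Lean document; each statement's English description precedes it below -/
import Mathlib

section
/- Let G be a group, let D_a : G →* GL (Fin n_a) ℂ, D_b : G →* GL (Fin n_b) ℂ, D_φ : G →* GL (Fin n_φ) ℂ be matrix representations, and let Γ : Fin n_φ → Matrix (Fin n_a) (Fin n_b) ℂ. For a : Fin n_a → ℂ, b : Fin n_b → ℂ, φ : Fin n_φ → ℂ set y(a,b,φ) := (star a) ⬝ᵥ ((∑ j, φ j • Γ j) *ᵥ b) and Y(a,b,φ) := y(a,b,φ) + star (y(a,b,φ)) (the Yukawa coupling). Then Y is G-invariant, i.e. Y(↑(D_a f) *ᵥ a, ↑(D_b f) *ᵥ b, ↑(D_φ f) *ᵥ φ) = Y(a,b,φ) for all f : G and all a, b, φ, if and only if the invariance equations hold: for every f : G and every k, (↑(D_a f))ᴴ * (∑ j, ((D_φ f) j k) • Γ j) * ↑(D_b f) = Γ k. -/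
open Matrix

/-- The bilinear part `y(a,b,φ) = a† (Γ_j φ_j) b` of a Yukawa coupling. -/
noncomputable def yuk {na nb nφ : ℕ} (Γ : Fin nφ → Matrix (Fin na) (Fin nb) ℂ)
    (a : Fin na → ℂ) (b : Fin nb → ℂ) (φ : Fin nφ → ℂ) : ℂ :=
  star a ⬝ᵥ ((∑ j, φ j • Γ j) *ᵥ b)

/-- The Yukawa coupling `Y(a,b,φ) = y(a,b,φ) + y(a,b,φ)*`. -/
noncomputable def Yukawa {na nb nφ : ℕ} (Γ : Fin nφ → Matrix (Fin na) (Fin nb) ℂ)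
    (a : Fin na → ℂ) (b : Fin nb → ℂ) (φ : Fin nφ → ℂ) : ℂ :=
  yuk Γ a b φ + star (yuk Γ a b φ)

lemma yuk_transform {na nb nφ : ℕ} (Γ : Fin nφ → Matrix (Fin na) (Fin nb) ℂ)
    (A : Matrix (Fin na) (Fin na) ℂ) (B : Matrix (Fin nb) (Fin nb) ℂ)
    (P : Matrix (Fin nφ) (Fin nφ) ℂ) (a : Fin na → ℂ) (b : Fin nb → ℂ) (φ : Fin nφ → ℂ) :
    yuk Γ (A *ᵥ a) (B *ᵥ b) (P *ᵥ φ) =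
      star a ⬝ᵥ ((∑ k, φ k • (Aᴴ * (∑ j, P j k • Γ j) * B)) *ᵥ b) := by
  rw [yuk, star_mulVec]
  rw [show (∑ j, (P *ᵥ φ) j • Γ j) = ∑ k, φ k • (∑ j, P j k • Γ j) by
    simp only [mulVec, dotProduct, Finset.sum_smul, Finset.smul_sum, smul_smul, mul_comm]
    rw [Finset.sum_comm]]
  rw [show (∑ k, φ k • (Aᴴ * (∑ j, P j k • Γ j) * B))
      = Aᴴ * (∑ k, φ k • (∑ j, P j k • Γ j)) * B by
    rw [Matrix.mul_sum, Matrix.sum_mul]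
    refine Finset.sum_congr rfl fun k _ => ?_
    rw [Matrix.mul_smul, Matrix.smul_mul]]
  simp [dotProduct_mulVec, vecMul_vecMul, Matrix.mul_assoc]

lemma extract {na nb : ℕ} (M N : Matrix (Fin na) (Fin nb) ℂ)
    (h : ∀ (a : Fin na → ℂ) (b : Fin nb → ℂ), star a ⬝ᵥ (M *ᵥ b) = star a ⬝ᵥ (N *ᵥ b)) :
    M = N := by
  ext i j
  have := h (Pi.single i 1) (Pi.single j 1)
  simpa [mulVec_single, dotProduct, Pi.single_apply] using this

lemma yuk_smul_left {na nb nφ : ℕ} (Γ : Fin nφ → Matrix (Fin na) (Fin nb) ℂ)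
    (c : ℂ) (a : Fin na → ℂ) (b : Fin nb → ℂ) (φ : Fin nφ → ℂ) :
    yuk Γ (c • a) b φ = star c * yuk Γ a b φ := by
  simp [yuk, star_smul, smul_dotProduct]

/-- A Yukawa coupling is invariant under the representations `D_a`, `D_b`, `D_φ` of a
group `G` if and only if the coefficient matrices `Γ_k` satisfy the invariance equations
`(D_a f)ᴴ Γ_j (D_φ f)_{jk} (D_b f) = Γ_k` for all `f ∈ G` and all `k`. -/
theorem yukawa_invariant_iff_invariance_equations
    (G : Type*) [Group G] (na nb nφ : ℕ)
    (Da : G →* GL (Fin na) ℂ) (Db : G →* GL (Fin nb) ℂ) (Dφ : G →* GL (Fin nφ) ℂ)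
    (Γ : Fin nφ → Matrix (Fin na) (Fin nb) ℂ) :
    (∀ (f : G) (a : Fin na → ℂ) (b : Fin nb → ℂ) (φ : Fin nφ → ℂ),
        Yukawa Γ ((Da f : Matrix (Fin na) (Fin na) ℂ) *ᵥ a)
          ((Db f : Matrix (Fin nb) (Fin nb) ℂ) *ᵥ b)
          ((Dφ f : Matrix (Fin nφ) (Fin nφ) ℂ) *ᵥ φ) = Yukawa Γ a b φ) ↔
    (∀ (f : G) (k : Fin nφ),
        (Da f : Matrix (Fin na) (Fin na) ℂ)ᴴ *
          (∑ j, (Dφ f : Matrix (Fin nφ) (Fin nφ) ℂ) j k • Γ j) *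
          (Db f : Matrix (Fin nb) (Fin nb) ℂ) = Γ k) := by
  constructor
  · intro h f k
    have hy : ∀ (a : Fin na → ℂ) (b : Fin nb → ℂ) (φ : Fin nφ → ℂ),
        yuk Γ ((Da f : Matrix (Fin na) (Fin na) ℂ) *ᵥ a)
          ((Db f : Matrix (Fin nb) (Fin nb) ℂ) *ᵥ b)
          ((Dφ f : Matrix (Fin nφ) (Fin nφ) ℂ) *ᵥ φ) = yuk Γ a b φ := by
      intro a b φ
      have h1 := h f a b φ
      have h2 := h f (Complex.I • a) b φ
      rw [mulVec_smul] at h2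
      simp only [Yukawa, yuk_smul_left, star_mul', star_star, Complex.star_def,
        map_neg, Complex.conj_I] at h1 h2
      have hII : Complex.I * Complex.I = -1 := Complex.I_mul_I
      linear_combination h1 / 2 + Complex.I * h2 / 2 +
        ((yuk Γ ((Da f : Matrix (Fin na) (Fin na) ℂ) *ᵥ a)
            ((Db f : Matrix (Fin nb) (Fin nb) ℂ) *ᵥ b)
            ((Dφ f : Matrix (Fin nφ) (Fin nφ) ℂ) *ᵥ φ) - yuk Γ a b φ +
          (starRingEnd ℂ) (yuk Γ a b φ) -
          (starRingEnd ℂ) (yuk Γ ((Da f : Matrix (Fin na) (Fin na) ℂ) *ᵥ a)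
            ((Db f : Matrix (Fin nb) (Fin nb) ℂ) *ᵥ b)
            ((Dφ f : Matrix (Fin nφ) (Fin nφ) ℂ) *ᵥ φ))) / 2) * hII
    apply extract
    intro a b
    have := hy a b (Pi.single k 1)
    rw [yuk_transform] at this
    simpa [yuk, Pi.single_apply, Finset.sum_ite_eq'] using this
  · intro h f a b φ
    have : yuk Γ ((Da f : Matrix (Fin na) (Fin na) ℂ) *ᵥ a)
        ((Db f : Matrix (Fin nb) (Fin nb) ℂ) *ᵥ b)
        ((Dφ f : Matrix (Fin nφ) (Fin nφ) ℂ) *ᵥ φ) = yuk Γ a b φ := by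
      rw [yuk_transform]
      simp only [h f]
      rfl
    rw [Yukawa, Yukawa, this]
end

section
/- Let G be a finite group and A a finite commutative group, and suppose there is an injective group homomorphism φ : G × A →* Matrix.specialUnitaryGroup (Fin 3) ℂ whose image acts irreducibly on ℂ³, i.e. the only ℂ-submodules W of (Fin 3 → ℂ) satisfying (↑(φ x)) *ᵥ v ∈ W for every x : G × A and v ∈ W are W = ⊥ and W = ⊤. Then A is isomorphic to the cyclic group of order 3 or to the trivial group: Nat.card A = 1 ∨ Nat.card A = 3. -/
open Matrix

/-- If a direct product `G × A` of a finite group `G` with a finite commutative group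
`A` embeds into `SU(3)` with irreducible image, then `A` is isomorphic to the trivial
group or to the cyclic group of order `3`. -/
theorem abelian_factor_of_irreducible_SU3
    (G A : Type*) [Group G] [Finite G] [CommGroup A] [Finite A]
    (φ : G × A →* Matrix.specialUnitaryGroup (Fin 3) ℂ)
    (hinj : Function.Injective φ)
    (hirr : ∀ W : Submodule ℂ (Fin 3 → ℂ),
      (∀ (x : G × A) (v : Fin 3 → ℂ), v ∈ W →
        ((φ x : Matrix.specialUnitaryGroup (Fin 3) ℂ) : Matrix (Fin 3) (Fin 3) ℂ) *ᵥ v ∈ W) →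
      W = ⊥ ∨ W = ⊤) :
    Nat.card A = 1 ∨ Nat.card A = 3 := by
  -- Step 1: each φ(1,a) is scalar
  have hscalar : ∀ a : A, ∃ c : ℂ,
      ((φ (1, a) : Matrix.specialUnitaryGroup (Fin 3) ℂ) : Matrix (Fin 3) (Fin 3) ℂ)
        = c • (1 : Matrix (Fin 3) (Fin 3) ℂ) ∧ c ^ 3 = 1 := by
    intro a
    set M : Matrix (Fin 3) (Fin 3) ℂ := ((φ (1, a) : Matrix.specialUnitaryGroup (Fin 3) ℂ) :
      Matrix (Fin 3) (Fin 3) ℂ) with hM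
    have hcomm : ∀ x : G × A,
        M * ((φ x : Matrix.specialUnitaryGroup (Fin 3) ℂ) : Matrix (Fin 3) (Fin 3) ℂ)
          = ((φ x : Matrix.specialUnitaryGroup (Fin 3) ℂ) : Matrix (Fin 3) (Fin 3) ℂ) * M := by
      intro x
      have h1 : (1, a) * x = x * (1, a) := by
        obtain ⟨g, b⟩ := x
        simp [Prod.ext_iff, mul_comm]
      have h2 : φ (1, a) * φ x = φ x * φ (1, a) := by
        rw [← _root_.map_mul, ← _root_.map_mul, h1]
      have h3 := congrArg (fun z : Matrix.specialUnitaryGroup (Fin 3) ℂ =>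
        (z : Matrix (Fin 3) (Fin 3) ℂ)) h2
      simpa [MulMemClass.coe_mul] using h3
    obtain ⟨c, hc⟩ := Module.End.exists_eigenvalue (Matrix.mulVecLin M)
    set W := Module.End.eigenspace (Matrix.mulVecLin M) c with hW
    have hinv : ∀ (x : G × A) (v : Fin 3 → ℂ), v ∈ W →
        ((φ x : Matrix.specialUnitaryGroup (Fin 3) ℂ) : Matrix (Fin 3) (Fin 3) ℂ) *ᵥ v ∈ W := by
      intro x v hv
      rw [hW, Module.End.mem_eigenspace_iff] at hv ⊢
      set N : Matrix (Fin 3) (Fin 3) ℂ := ((φ x : Matrix.specialUnitaryGroup (Fin 3) ℂ) :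
        Matrix (Fin 3) (Fin 3) ℂ)
      have : M *ᵥ (N *ᵥ v) = N *ᵥ (M *ᵥ v) := by
        rw [mulVec_mulVec, mulVec_mulVec, hcomm x]
      simp only [Matrix.mulVecLin_apply] at hv ⊢
      rw [this, hv, mulVec_smul]
    rcases hirr W hinv with hbot | htop
    · exact absurd hbot hc
    · refine ⟨c, ?_, ?_⟩
      · ext i j
        have hj : (Pi.single j 1 : Fin 3 → ℂ) ∈ W := htop ▸ Submodule.mem_top
        rw [hW, Module.End.mem_eigenspace_iff] at hj
        have := congrFun hj i
        simp only [Matrix.mulVecLin_apply, mulVec_single, op_smul_eq_mul, Matrix.col_apply,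
          mul_one, Pi.smul_apply, smul_eq_mul] at this
        simp only [Matrix.smul_apply, Matrix.one_apply, smul_eq_mul]
        rw [this]
        by_cases h : i = j <;> simp [h, Pi.single_apply]
      · have hdet : M.det = 1 := by
          have := (φ (1, a)).2
          rw [Matrix.mem_specialUnitaryGroup_iff] at this
          exact this.2
        have hMc : M = c • (1 : Matrix (Fin 3) (Fin 3) ℂ) := by
          ext i j
          have hj : (Pi.single j 1 : Fin 3 → ℂ) ∈ W := htop ▸ Submodule.mem_top
          rw [hW, Module.End.mem_eigenspace_iff] at hj
          have := congrFun hj i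
          simp only [Matrix.mulVecLin_apply, mulVec_single, op_smul_eq_mul, Matrix.col_apply,
            mul_one, Pi.smul_apply, smul_eq_mul] at this
          simp only [Matrix.smul_apply, Matrix.one_apply, smul_eq_mul]
          rw [this]
          by_cases h : i = j <;> simp [h, Pi.single_apply]
        rw [hMc] at hdet
        simpa [Matrix.det_smul, Fintype.card_fin] using hdet
  -- Step 2: build injective hom A →* ℂˣ
  choose f hf hf3 using hscalar
  have hf_inj : Function.Injective f := by
    intro a a' h
    have : φ (1, a) = φ (1, a') := by
      apply Subtype.ext
      rw [hf a, hf a', h]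
    have := hinj this
    exact (Prod.ext_iff.mp this).2
  have hf_mul : ∀ a a' : A, f (a * a') = f a * f a' := by
    intro a a'
    have h1 : ((φ (1, a * a') : Matrix.specialUnitaryGroup (Fin 3) ℂ) :
        Matrix (Fin 3) (Fin 3) ℂ)
        = ((φ (1, a) : Matrix.specialUnitaryGroup (Fin 3) ℂ) : Matrix (Fin 3) (Fin 3) ℂ)
          * ((φ (1, a') : Matrix.specialUnitaryGroup (Fin 3) ℂ) :
            Matrix (Fin 3) (Fin 3) ℂ) := by
      have h0 : ((1 : G), a * a') = (1, a) * (1, a') := by simp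
      rw [h0, _root_.map_mul]
      rfl
    rw [hf, hf, hf, smul_mul_smul_comm] at h1
    have h2 := congrFun (congrFun h1 0) 0
    simpa using h2
  have hf_one : f 1 = 1 := by
    have h1 := hf (1 : A)
    rw [show ((1 : G), (1 : A)) = 1 from rfl, _root_.map_one] at h1
    have h2 : (1 : Matrix (Fin 3) (Fin 3) ℂ) = f 1 • 1 := h1
    have h3 := congrFun (congrFun h2 0) 0
    simpa using h3.symm
  set ψ : A →* ℂ := { toFun := f, map_one' := hf_one, map_mul' := hf_mul }
  -- orders divide 3
  have hpow : ∀ a : A, a ^ 3 = 1 := by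
    intro a
    apply hf_inj
    rw [hf_one]
    calc f (a ^ 3) = ψ (a ^ 3) := rfl
    _ = ψ a ^ 3 := map_pow ψ a 3
    _ = 1 := hf3 a
  -- A is cyclic: embed into units of ℂ
  set ψu : A →* ℂˣ := ψ.toHomUnits
  have hψu_inj : Function.Injective ψu := by
    intro a b h
    apply hf_inj
    have := congrArg (Units.val) h
    have h' : ψ a = ψ b := by simpa [ψu] using this
    exact h'
  have : IsCyclic A := by
    have hfin : Finite ψu.range :=
      Finite.of_surjective _ ψu.rangeRestrict_surjective
    have e : A ≃* ψu.range := MonoidHom.ofInjective hψu_inj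
    have : IsCyclic ψu.range := inferInstance
    exact isCyclic_of_surjective e.symm e.symm.surjective
  obtain ⟨g, hg⟩ := this.exists_generator
  have hcard : Nat.card A = orderOf g := by
    have := Fintype.ofFinite A
    rw [Nat.card_eq_fintype_card, orderOf_eq_card_of_forall_mem_zpowers hg]
    exact Nat.card_eq_fintype_card.symm
  have hdvd : orderOf g ∣ 3 := orderOf_dvd_of_pow_eq_one (hpow g)
  rw [hcard]
  exact (Nat.prime_three.eq_one_or_self_of_dvd _ hdvd)
end

section
/- Let SO3 denote the subgroup of Matrix.orthogonalGroup (Fin 3) ℝ consisting of the elements of determinant 1. There exists a group homomorphism φ : Matrix.specialUnitaryGroup (Fin 2) ℂ →* SO3 which is surjective and is '2 to 1': its kernel consists exactly of the two elements ±𝟙, i.e. for every U, φ U = 1 ↔ ((↑U : Matrix (Fin 2) (Fin 2) ℂ) = 1 ∨ (↑U : Matrix (Fin 2) (Fin 2) ℂ) = -1). -/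
open Matrix

/-- The rotation matrix associated to a quaternion `(w, x, y, z)`. -/
def rotM (w x y z : ℝ) : Matrix (Fin 3) (Fin 3) ℝ :=
  !![w^2+x^2-y^2-z^2, 2*(x*y-w*z), 2*(x*z+w*y);
     2*(x*y+w*z), w^2-x^2+y^2-z^2, 2*(y*z-w*x);
     2*(x*z-w*y), 2*(y*z+w*x), w^2-x^2-y^2+z^2]

theorem rotM_mul (w1 x1 y1 z1 w2 x2 y2 z2 : ℝ) :
    rotM (w1*w2 - x1*x2 - y1*y2 - z1*z2) (w1*x2 + x1*w2 + y1*z2 - z1*y2)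
      (w1*y2 - x1*z2 + y1*w2 + z1*x2) (w1*z2 + x1*y2 - y1*x2 + z1*w2)
      = rotM w1 x1 y1 z1 * rotM w2 x2 y2 z2 := by
  ext i j
  simp only [Matrix.mul_apply, Fin.sum_univ_three]
  fin_cases i <;> fin_cases j <;> simp [rotM] <;> ring

theorem rotM_orth {w x y z : ℝ} (h : w^2+x^2+y^2+z^2 = 1) :
    (rotM w x y z)ᵀ * rotM w x y z = 1 := by
  have h2 : (w^2+x^2+y^2+z^2)^2 = 1 := by rw [h]; ring
  ext i j
  simp only [Matrix.mul_apply, Matrix.transpose_apply, Fin.sum_univ_three]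
  fin_cases i <;> fin_cases j <;> norm_num [rotM, Matrix.one_apply, Fin.ext_iff, Matrix.cons_val_two, Matrix.tail_cons, Matrix.vecTail, Matrix.vecHead] <;>
    first
      | linear_combination h2
      | ring1

theorem rotM_det {w x y z : ℝ} (h : w^2+x^2+y^2+z^2 = 1) :
    (rotM w x y z).det = 1 := by
  have h3 : (w^2+x^2+y^2+z^2)^3 = 1 := by rw [h]; ring
  simp [rotM, Matrix.det_fin_three]
  linear_combination h3

theorem rotM_one : rotM 1 0 0 0 = 1 := by
  ext i j
  fin_cases i <;> fin_cases j <;> norm_num [rotM, Matrix.one_apply, Fin.ext_iff]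

theorem rotM_neg_one : rotM (-1) 0 0 0 = 1 := by
  ext i j
  fin_cases i <;> fin_cases j <;> norm_num [rotM, Matrix.one_apply, Fin.ext_iff]

theorem su2_entries {A : Matrix (Fin 2) (Fin 2) ℂ}
    (hA : A ∈ Matrix.specialUnitaryGroup (Fin 2) ℂ) :
    A 1 0 = -(starRingEnd ℂ) (A 0 1) ∧ A 1 1 = (starRingEnd ℂ) (A 0 0) := by
  obtain ⟨hu, hdet⟩ := Matrix.mem_specialUnitaryGroup_iff.mp hA
  have h1 : star A * A = 1 := Matrix.mem_unitaryGroup_iff'.mp hu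
  have h3 : star A = A.adjugate := by
    calc star A = star A * (A * A.adjugate) := by
            rw [Matrix.mul_adjugate, hdet, one_smul, mul_one]
      _ = (star A * A) * A.adjugate := by rw [mul_assoc]
      _ = A.adjugate := by rw [h1, one_mul]
  have h4 : star A 0 1 = A.adjugate 0 1 := by rw [h3]
  have h5 : star A 0 0 = A.adjugate 0 0 := by rw [h3]
  rw [Matrix.adjugate_fin_two] at h4 h5
  simp [Matrix.star_apply] at h4 h5
  constructor
  · rw [← neg_eq_iff_eq_neg] at h4 ⊢
    rw [← h4]; simp
  · rw [← h5]

theorem su2_norm {A : Matrix (Fin 2) (Fin 2) ℂ}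
    (hA : A ∈ Matrix.specialUnitaryGroup (Fin 2) ℂ)
    (h10 : A 1 0 = -(starRingEnd ℂ) (A 0 1)) (h11 : A 1 1 = (starRingEnd ℂ) (A 0 0)) :
    (A 0 0).re^2 + (A 0 0).im^2 + (A 0 1).re^2 + (A 0 1).im^2 = 1 := by
  obtain ⟨-, hdet⟩ := Matrix.mem_specialUnitaryGroup_iff.mp hA
  rw [Matrix.det_fin_two, h10, h11] at hdet
  have := congrArg Complex.re hdet
  simp [Complex.mul_re] at this
  nlinarith [this]

def mkSU (w x y z : ℝ) : Matrix (Fin 2) (Fin 2) ℂ :=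
  !![⟨w, x⟩, ⟨y, z⟩; ⟨-y, z⟩, ⟨w, -x⟩]

theorem mkSU_mem {w x y z : ℝ} (h : w^2+x^2+y^2+z^2 = 1) :
    mkSU w x y z ∈ Matrix.specialUnitaryGroup (Fin 2) ℂ := by
  rw [Matrix.mem_specialUnitaryGroup_iff]
  constructor
  · rw [Matrix.mem_unitaryGroup_iff']
    ext i j
    simp only [Matrix.mul_apply, Fin.sum_univ_two, Matrix.star_apply, Matrix.one_apply]
    fin_cases i <;> fin_cases j <;>
      simp [mkSU, Complex.ext_iff, Complex.mul_re, Complex.mul_im] <;>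
      constructor <;> linarith
  · rw [Matrix.det_fin_two]
    simp [mkSU, Complex.ext_iff, Complex.mul_re, Complex.mul_im]
    constructor <;> linarith

theorem half_angle {a b : ℝ} (h : a^2 + b^2 = 1) :
    ∃ w t : ℝ, w^2 + t^2 = 1 ∧ w^2 - t^2 = a ∧ 2*w*t = b := by
  have ha : -1 ≤ a := by nlinarith
  rcases eq_or_lt_of_le ha with ha1 | ha1
  · refine ⟨0, 1, by norm_num, by rw [← ha1]; ring, ?_⟩
    have : b = 0 := by nlinarith
    simp [this]
  · have hpos : 0 < 1 + a := by linarith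
    set w := Real.sqrt ((1+a)/2) with hw
    have hw2 : w^2 = (1+a)/2 := Real.sq_sqrt (by linarith)
    have hwpos : 0 < w := Real.sqrt_pos.mpr (by linarith)
    refine ⟨w, b/(2*w), ?_, ?_, ?_⟩
    · field_simp
      nlinarith [hw2, h]
    · field_simp
      nlinarith [hw2, h]
    · field_simp

theorem rotM_z {w t : ℝ} (h : w^2 + t^2 = 1) :
    rotM w 0 0 t = !![w^2-t^2, -(2*w*t), 0; 2*w*t, w^2-t^2, 0; 0, 0, 1] := by
  rw [rotM]
  ext i j
  fin_cases i <;> fin_cases j <;> simp <;> linarith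

theorem rotM_y {w t : ℝ} (h : w^2 + t^2 = 1) :
    rotM w 0 t 0 = !![w^2-t^2, 0, 2*w*t; 0, 1, 0; -(2*w*t), 0, w^2-t^2] := by
  rw [rotM]
  ext i j
  fin_cases i <;> fin_cases j <;> simp <;> linarith

set_option maxHeartbeats 1000000 in
theorem surj_aux {R : Matrix (Fin 3) (Fin 3) ℝ} (hO : Rᵀ * R = 1) (hD : R.det = 1) :
    ∃ w x y z : ℝ, w^2+x^2+y^2+z^2 = 1 ∧ rotM w x y z = R := by
  have hcol : ∀ i j : Fin 3, (R 0 i) * (R 0 j) + (R 1 i) * (R 1 j) + (R 2 i) * (R 2 j)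
      = if i = j then 1 else 0 := by
    intro i j
    have := congrFun (congrFun hO i) j
    simpa [Matrix.mul_apply, Fin.sum_univ_three, Matrix.transpose_apply, Matrix.one_apply]
      using this
  have hn : (R 0 2)^2 + (R 1 2)^2 + (R 2 2)^2 = 1 := by
    have := hcol 2 2
    simp at this
    nlinarith [this]
  set s := Real.sqrt ((R 0 2)^2 + (R 1 2)^2) with hs
  have hs0 : 0 ≤ s := Real.sqrt_nonneg _
  have hs2 : s^2 = (R 0 2)^2 + (R 1 2)^2 := Real.sq_sqrt (by positivity)
  have hn2s : (R 2 2)^2 + s^2 = 1 := by rw [hs2]; linarith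
  obtain ⟨c, d, hcd, hcs, hds⟩ :
      ∃ c d : ℝ, c^2 + d^2 = 1 ∧ c * s = (R 0 2) ∧ d * s = (R 1 2) := by
    rcases eq_or_lt_of_le hs0 with h0 | h0
    · have hz0 : (R 0 2) = 0 := by nlinarith [hs2]
      have hz1 : (R 1 2) = 0 := by nlinarith [hs2]
      exact ⟨1, 0, by norm_num, by rw [← h0, hz0]; ring, by rw [← h0, hz1]; ring⟩
    · refine ⟨(R 0 2)/s, (R 1 2)/s, ?_, by field_simp, by field_simp⟩
      field_simp
      linarith [hs2]
  set A : Matrix (Fin 3) (Fin 3) ℝ := !![c,-d,0;d,c,0;0,0,1] with hA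
  set B : Matrix (Fin 3) (Fin 3) ℝ := !![(R 2 2),0,s;0,1,0;-s,0,(R 2 2)] with hB
  have hAo : A * Aᵀ = 1 := by
    ext i j
    simp only [Matrix.mul_apply, Matrix.transpose_apply, Fin.sum_univ_three]
    fin_cases i <;> fin_cases j <;> simp [hA, Matrix.one_apply] <;> linarith
  have hBo : B * Bᵀ = 1 := by
    ext i j
    simp only [Matrix.mul_apply, Matrix.transpose_apply, Fin.sum_univ_three]
    fin_cases i <;> fin_cases j <;> simp [hB, Matrix.one_apply] <;> linarith
  set T := Bᵀ * (Aᵀ * R) with hT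
  have hRT : R = A * (B * T) := by
    rw [hT, ← Matrix.mul_assoc B Bᵀ, hBo, Matrix.one_mul, ← Matrix.mul_assoc A Aᵀ, hAo,
      Matrix.one_mul]
  have hTo : Tᵀ * T = 1 := by
    have : Tᵀ = Rᵀ * A * B := by
      rw [hT, Matrix.transpose_mul, Matrix.transpose_mul, Matrix.transpose_transpose,
        Matrix.transpose_transpose, Matrix.mul_assoc]
    rw [this, hT, Matrix.mul_assoc, Matrix.mul_assoc, ← Matrix.mul_assoc B Bᵀ, hBo,
      Matrix.one_mul, ← Matrix.mul_assoc A Aᵀ, hAo, Matrix.one_mul]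
    exact hO
  have hdA : A.det = 1 := by
    rw [hA, Matrix.det_fin_three]; simp; linarith
  have hdB : B.det = 1 := by
    rw [hB, Matrix.det_fin_three]; simp; linarith
  have hdT : T.det = 1 := by
    rw [hT, Matrix.det_mul, Matrix.det_mul, Matrix.det_transpose, Matrix.det_transpose,
      hdA, hdB, hD]
    norm_num
  have h02 : T 0 2 = 0 := by
    simp only [hT, Matrix.mul_apply, Fin.sum_univ_three, Matrix.transpose_apply, hA, hB]
    simp
    linear_combination (-(R 2 2)*c)*hcs + (-(R 2 2)*d)*hds + (s*(R 2 2))*hcd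
  have h12 : T 1 2 = 0 := by
    simp only [hT, Matrix.mul_apply, Fin.sum_univ_three, Matrix.transpose_apply, hA, hB]
    simp
    linear_combination d*hcs + (-c)*hds
  have h22 : T 2 2 = 1 := by
    simp only [hT, Matrix.mul_apply, Fin.sum_univ_three, Matrix.transpose_apply, hA, hB]
    simp
    linear_combination (-s*c)*hcs + (-s*d)*hds + (s^2)*hcd + hn2s
  have hTent : ∀ i j : Fin 3, T 0 i * T 0 j + T 1 i * T 1 j + T 2 i * T 2 j
      = if i = j then 1 else 0 := by
    intro i j
    have := congrFun (congrFun hTo i) j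
    simpa [Matrix.mul_apply, Fin.sum_univ_three, Matrix.transpose_apply, Matrix.one_apply]
      using this
  have h20 : T 2 0 = 0 := by
    have := hTent 0 2
    rw [h02, h12, h22] at this
    simp at this
    linarith
  have h21 : T 2 1 = 0 := by
    have := hTent 1 2
    rw [h02, h12, h22] at this
    simp at this
    linarith
  have hpr : (T 0 0)^2 + (T 1 0)^2 = 1 := by
    have := hTent 0 0
    rw [h20] at this
    simp at this
    nlinarith [this]
  have hpq : (T 0 0)*(T 0 1) + (T 1 0)*(T 1 1) = 0 := by
    have := hTent 0 1
    rw [h20, h21] at this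
    simp at this
    nlinarith [this]
  have hdT' : (T 0 0)*(T 1 1) - (T 0 1)*(T 1 0) = 1 := by
    rw [Matrix.det_fin_three] at hdT
    rw [h02, h12, h22, h20, h21] at hdT
    linarith [hdT]
  have hqr : T 0 1 = -(T 1 0) := by
    linear_combination (-(T 0 1))*hpr + (T 0 0)*hpq + (-(T 1 0))*hdT'
  have hmp : T 1 1 = T 0 0 := by
    linear_combination (-(T 1 1))*hpr + (T 1 0)*hpq + (T 0 0)*hdT'
  have hTform : T = !![T 0 0, -(T 1 0), 0; T 1 0, T 0 0, 0; 0, 0, 1] := by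
    ext i j
    fin_cases i <;> fin_cases j <;>
      simp [h02, h12, h22, h20, h21, hqr, hmp]
  obtain ⟨a1, b1, hn1x, hc1, hd1⟩ := half_angle hcd
  obtain ⟨a2, b2, hq2, hc2, hd2⟩ := half_angle hn2s
  obtain ⟨a3, b3, hn3, hc3, hd3⟩ := half_angle hpr
  have hAeq : A = rotM a1 0 0 b1 := by
    rw [rotM_z hn1x, hc1, hd1, hA]
  have hBeq : B = rotM a2 0 b2 0 := by
    rw [rotM_y hq2, hc2, hd2, hB]
  have hTeq : T = rotM a3 0 0 b3 := by
    rw [rotM_z hn3, hc3, hd3]; exact hTform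
  rw [hAeq, hBeq, hTeq, ← rotM_mul, ← rotM_mul] at hRT
  refine ⟨_, _, _, _, ?_, hRT.symm⟩
  have e1 : ∀ w1 x1 y1 z1 w2 x2 y2 z2 : ℝ,
      (w1*w2 - x1*x2 - y1*y2 - z1*z2)^2 + (w1*x2 + x1*w2 + y1*z2 - z1*y2)^2
      + (w1*y2 - x1*z2 + y1*w2 + z1*x2)^2 + (w1*z2 + x1*y2 - y1*x2 + z1*w2)^2
      = (w1^2+x1^2+y1^2+z1^2) * (w2^2+x2^2+y2^2+z2^2) := by intros; ring
  rw [e1, e1]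
  rw [show a2^2+(0:ℝ)^2+b2^2+0^2 = 1 by linarith [hq2],
    show a3^2+(0:ℝ)^2+0^2+b3^2 = 1 by linarith [hn3],
    show a1^2+(0:ℝ)^2+0^2+b1^2 = 1 by linarith [hn1x]]
  norm_num

/-- `SO3` is the subgroup of the orthogonal group `O(3)` consisting of the elements of
determinant `1`. -/
def SO3 : Subgroup (Matrix.orthogonalGroup (Fin 3) ℝ) where
  carrier := {R | (R : Matrix (Fin 3) (Fin 3) ℝ).det = 1}
  one_mem' := by simp
  mul_mem' := by
    intro a b ha hb
    simp only [Set.mem_setOf_eq] at *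
    rw [Matrix.UnitaryGroup.mul_val, Matrix.det_mul, ha, hb, mul_one]
  inv_mem' := by
    intro a ha
    simp only [Set.mem_setOf_eq] at *
    rw [Matrix.UnitaryGroup.inv_val, Matrix.star_eq_conjTranspose,
      Matrix.det_conjTranspose, ha, star_one]

-- helpers
theorem star_eq_transpose (M : Matrix (Fin 3) (Fin 3) ℝ) : star M = Mᵀ := by
  ext i j
  simp [Matrix.star_apply]

theorem su2_norm' (U : Matrix.specialUnitaryGroup (Fin 2) ℂ) :
    ((U : Matrix (Fin 2) (Fin 2) ℂ) 0 0).re^2 + ((U : Matrix (Fin 2) (Fin 2) ℂ) 0 0).im^2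
      + ((U : Matrix (Fin 2) (Fin 2) ℂ) 0 1).re^2 + ((U : Matrix (Fin 2) (Fin 2) ℂ) 0 1).im^2
      = 1 := by
  obtain ⟨h10, h11⟩ := su2_entries U.2
  exact su2_norm U.2 h10 h11

def phi0 (U : Matrix.specialUnitaryGroup (Fin 2) ℂ) : Matrix (Fin 3) (Fin 3) ℝ :=
  rotM ((U : Matrix (Fin 2) (Fin 2) ℂ) 0 0).re ((U : Matrix (Fin 2) (Fin 2) ℂ) 0 0).im
       ((U : Matrix (Fin 2) (Fin 2) ℂ) 0 1).re ((U : Matrix (Fin 2) (Fin 2) ℂ) 0 1).im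

theorem phi0_mul (U V : Matrix.specialUnitaryGroup (Fin 2) ℂ) :
    phi0 (U * V) = phi0 U * phi0 V := by
  obtain ⟨hv10, hv11⟩ := su2_entries V.2
  have hUV : ((U * V : Matrix.specialUnitaryGroup (Fin 2) ℂ) : Matrix (Fin 2) (Fin 2) ℂ)
      = (U : Matrix (Fin 2) (Fin 2) ℂ) * (V : Matrix (Fin 2) (Fin 2) ℂ) := rfl
  have h00 : ((U * V : Matrix.specialUnitaryGroup (Fin 2) ℂ) : Matrix (Fin 2) (Fin 2) ℂ) 0 0
      = (U : Matrix (Fin 2) (Fin 2) ℂ) 0 0 * (V : Matrix (Fin 2) (Fin 2) ℂ) 0 0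
        + (U : Matrix (Fin 2) (Fin 2) ℂ) 0 1 * (V : Matrix (Fin 2) (Fin 2) ℂ) 1 0 := by
    rw [hUV, Matrix.mul_apply, Fin.sum_univ_two]
  have h01 : ((U * V : Matrix.specialUnitaryGroup (Fin 2) ℂ) : Matrix (Fin 2) (Fin 2) ℂ) 0 1
      = (U : Matrix (Fin 2) (Fin 2) ℂ) 0 0 * (V : Matrix (Fin 2) (Fin 2) ℂ) 0 1
        + (U : Matrix (Fin 2) (Fin 2) ℂ) 0 1 * (V : Matrix (Fin 2) (Fin 2) ℂ) 1 1 := by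
    rw [hUV, Matrix.mul_apply, Fin.sum_univ_two]
  rw [phi0, h00, h01, hv10, hv11]
  rw [phi0, phi0, ← rotM_mul]
  congr 1 <;> simp [Complex.mul_re, Complex.mul_im] <;> ring

theorem phi0_orthMem (U : Matrix.specialUnitaryGroup (Fin 2) ℂ) :
    phi0 U ∈ Matrix.orthogonalGroup (Fin 3) ℝ := by
  rw [Matrix.mem_orthogonalGroup_iff']
  exact rotM_orth (su2_norm' U)

noncomputable def Phi : Matrix.specialUnitaryGroup (Fin 2) ℂ →* SO3 where
  toFun U := ⟨⟨phi0 U, phi0_orthMem U⟩, rotM_det (su2_norm' U)⟩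
  map_one' := by
    apply Subtype.ext; apply Subtype.ext
    show phi0 1 = 1
    have h00 : ((1 : Matrix.specialUnitaryGroup (Fin 2) ℂ) : Matrix (Fin 2) (Fin 2) ℂ) 0 0
        = 1 := by simp [Matrix.one_apply]
    have h01 : ((1 : Matrix.specialUnitaryGroup (Fin 2) ℂ) : Matrix (Fin 2) (Fin 2) ℂ) 0 1
        = 0 := by simp [Matrix.one_apply]
    rw [phi0, h00, h01]
    simpa using rotM_one
  map_mul' U V := by
    apply Subtype.ext; apply Subtype.ext
    exact phi0_mul U V

theorem Phi_surjective : Function.Surjective Phi := by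
  rintro ⟨⟨R, hR⟩, hdet⟩
  have hO : Rᵀ * R = 1 := by
    have := (Matrix.mem_orthogonalGroup_iff' (A := R)).mp hR
    exact this
  have hD : R.det = 1 := hdet
  obtain ⟨w, x, y, z, hnorm, hrot⟩ := surj_aux hO hD
  refine ⟨⟨mkSU w x y z, mkSU_mem hnorm⟩, ?_⟩
  apply Subtype.ext; apply Subtype.ext
  show phi0 _ = R
  rw [phi0]
  have e00 : (mkSU w x y z) 0 0 = ⟨w, x⟩ := by simp [mkSU]
  have e01 : (mkSU w x y z) 0 1 = ⟨y, z⟩ := by simp [mkSU]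
  show rotM ((mkSU w x y z) 0 0).re ((mkSU w x y z) 0 0).im
      ((mkSU w x y z) 0 1).re ((mkSU w x y z) 0 1).im = R
  rw [e00, e01]
  exact hrot

theorem Phi_kernel (U : Matrix.specialUnitaryGroup (Fin 2) ℂ) :
    Phi U = 1 ↔ ((U : Matrix (Fin 2) (Fin 2) ℂ) = 1 ∨
      (U : Matrix (Fin 2) (Fin 2) ℂ) = -1) := by
  constructor
  · intro h
    have h1' := congrArg Subtype.val h
    have hm : phi0 U = 1 := congrArg Subtype.val h1'
    set a := ((U : Matrix (Fin 2) (Fin 2) ℂ) 0 0) with ha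
    set b := ((U : Matrix (Fin 2) (Fin 2) ℂ) 0 1) with hb
    have hnorm := su2_norm' U
    rw [phi0] at hm
    have h00 : a.re^2 + a.im^2 - b.re^2 - b.im^2 = 1 := by
      have := congrFun (congrFun hm 0) 0
      simpa [rotM, Matrix.one_apply] using this
    have h11 : a.re^2 - a.im^2 + b.re^2 - b.im^2 = 1 := by
      have := congrFun (congrFun hm 1) 1
      simpa [rotM, Matrix.one_apply] using this
    have h22 : a.re^2 - a.im^2 - b.re^2 + b.im^2 = 1 := by
      have := congrFun (congrFun hm 2) 2
      simpa [rotM, Matrix.one_apply] using this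
    have hx : a.im = 0 := by nlinarith [hnorm, h00, h11, h22]
    have hy : b.re = 0 := by nlinarith [hnorm, h00, h11, h22]
    have hz : b.im = 0 := by nlinarith [hnorm, h00, h11, h22]
    have hw : a.re = 1 ∨ a.re = -1 := by
      have : (a.re - 1) * (a.re + 1) = 0 := by nlinarith [hnorm]
      rcases mul_eq_zero.mp this with h | h
      · left; linarith
      · right; linarith
    obtain ⟨h10, h11'⟩ := su2_entries U.2
    have hbz : b = 0 := by
      apply Complex.ext <;> simp [hy, hz]
    rcases hw with hw | hw
    · left
      have haz : a = 1 := by apply Complex.ext <;> simp [hw, hx]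
      ext i j
      fin_cases i <;> fin_cases j <;>
        simp [Matrix.one_apply, ← ha, ← hb, haz, hbz, h10, h11']
    · right
      have haz : a = -1 := by apply Complex.ext <;> simp [hw, hx]
      ext i j
      fin_cases i <;> fin_cases j <;>
        simp [Matrix.one_apply, ← ha, ← hb, haz, hbz, h10, h11']
  · intro h
    apply Subtype.ext; apply Subtype.ext
    show phi0 U = 1
    rcases h with h | h
    · rw [phi0, h]
      simpa [Matrix.one_apply] using rotM_one
    · rw [phi0, h]
      have : ((-1 : Matrix (Fin 2) (Fin 2) ℂ) 0 0) = -1 := by simp [Matrix.one_apply]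
      have h2 : ((-1 : Matrix (Fin 2) (Fin 2) ℂ) 0 1) = 0 := by simp [Matrix.one_apply]
      rw [this, h2]
      simpa using rotM_neg_one

/-- **The 2-to-1 homomorphism from SU(2) onto SO(3).**
There is a surjective group homomorphism `φ : SU(2) → SO(3)` whose kernel consists
exactly of the two elements `±𝟙`. -/
theorem exists_two_to_one_hom_SU2_to_SO3 :
    ∃ φ : Matrix.specialUnitaryGroup (Fin 2) ℂ →* SO3,
      Function.Surjective φ ∧
      ∀ U : Matrix.specialUnitaryGroup (Fin 2) ℂ,
        φ U = 1 ↔ ((U : Matrix (Fin 2) (Fin 2) ℂ) = 1 ∨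
          (U : Matrix (Fin 2) (Fin 2) ℂ) = -1) := by
  exact ⟨Phi, Phi_surjective, Phi_kernel⟩
end

section
/- For x : Fin 4 → ℝ define the Hermitian matrix X x := ((x 0 : ℝ) : ℂ) • (1 : Matrix (Fin 2) (Fin 2) ℂ) - ((x 1 : ℝ) : ℂ) • σ₁ - ((x 2 : ℝ) : ℂ) • σ₂ - ((x 3 : ℝ) : ℂ) • σ₃, and let η := Matrix.diagonal ![1, -1, -1, -1] : Matrix (Fin 4) (Fin 4) ℝ be the Minkowski metric. Then: (a) for every A : Matrix (Fin 2) (Fin 2) ℂ with A.det = 1 there exists a unique real matrix L_A : Matrix (Fin 4) (Fin 4) ℝ such that A * X x * Aᴴ = X (L_A *ᵥ x) for all x : Fin 4 → ℝ; (b) this L_A is a Lorentz transformation, L_Aᵀ * η * L_A = η; and (c) the assignment is multiplicative: if A, B both have determinant 1 then L_{A*B} = L_A * L_B. -/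
open Matrix

/-- The first Pauli matrix. -/
def σ₁ : Matrix (Fin 2) (Fin 2) ℂ := !![0, 1; 1, 0]

/-- The second Pauli matrix. -/
def σ₂ : Matrix (Fin 2) (Fin 2) ℂ := !![0, -Complex.I; Complex.I, 0]

/-- The third Pauli matrix. -/
def σ₃ : Matrix (Fin 2) (Fin 2) ℂ := !![1, 0; 0, -1]

/-- The Hermitian matrix `X x = x⁰ • 1 - x¹ • σ₁ - x² • σ₂ - x³ • σ₃` associated to a
four-vector `x`. -/
noncomputable def X (x : Fin 4 → ℝ) : Matrix (Fin 2) (Fin 2) ℂ :=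
  (x 0 : ℂ) • (1 : Matrix (Fin 2) (Fin 2) ℂ) - (x 1 : ℂ) • σ₁ - (x 2 : ℂ) • σ₂ -
    (x 3 : ℂ) • σ₃

/-- The Minkowski metric `η = diag (1, -1, -1, -1)`. -/
def η : Matrix (Fin 4) (Fin 4) ℝ := Matrix.diagonal ![1, -1, -1, -1]

lemma X_apply (x : Fin 4 → ℝ) :
    X x = !![(x 0 - x 3 : ℂ), -(x 1 : ℂ) + (x 2 : ℂ) * Complex.I;
             -(x 1 : ℂ) - (x 2 : ℂ) * Complex.I, (x 0 : ℂ) + (x 3 : ℂ)] := by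
  ext i j
  fin_cases i <;> fin_cases j <;>
    simp [X, σ₁, σ₂, σ₃, Matrix.one_apply] <;> ring

lemma X_injective : Function.Injective X := by
  intro x y h
  rw [X_apply, X_apply] at h
  have h00 := congrFun (congrFun h 0) 0
  have h01 := congrFun (congrFun h 0) 1
  have h11 := congrFun (congrFun h 1) 1
  simp [Complex.ext_iff] at h00 h01 h11
  funext i
  fin_cases i <;> simp <;> linarith [h00, h01.1, h01.2, h11]

lemma X_herm (x : Fin 4 → ℝ) : (X x)ᴴ = X x := by
  rw [X_apply]
  ext i j
  fin_cases i <;> fin_cases j <;>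
    simp [Matrix.conjTranspose_apply, Complex.ext_iff]

noncomputable def coords (M : Matrix (Fin 2) (Fin 2) ℂ) : Fin 4 → ℝ :=
  ![((M 0 0).re + (M 1 1).re) / 2, -(M 0 1).re, (M 0 1).im, ((M 1 1).re - (M 0 0).re) / 2]

lemma X_coords (M : Matrix (Fin 2) (Fin 2) ℂ) (h : Mᴴ = M) : X (coords M) = M := by
  have h00 : (M 0 0).im = 0 := by
    have := congrFun (congrFun h 0) 0
    simp [Matrix.conjTranspose_apply, Complex.ext_iff] at this
    linarith [this]
  have h11 : (M 1 1).im = 0 := by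
    have := congrFun (congrFun h 1) 1
    simp [Matrix.conjTranspose_apply, Complex.ext_iff] at this
    linarith [this]
  have h10 : M 1 0 = (starRingEnd ℂ) (M 0 1) := by
    have := congrFun (congrFun h 1) 0
    simpa [Matrix.conjTranspose_apply] using this.symm
  rw [X_apply]
  ext i j
  fin_cases i <;> fin_cases j <;>
    simp [coords, h10, Complex.ext_iff] <;> constructor <;> ring_nf <;>
      first | linarith [h00] | linarith [h11] | ring

noncomputable def Xl : (Fin 4 → ℝ) →ₗ[ℝ] Matrix (Fin 2) (Fin 2) ℂ where
  toFun := X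
  map_add' x y := by
    rw [X_apply, X_apply, X_apply]
    ext i j
    fin_cases i <;> fin_cases j <;> simp <;> push_cast <;> ring
  map_smul' c x := by
    show X (c • x) = (RingHom.id ℝ) c • X x
    simp only [RingHom.id_apply]
    rw [X_apply, X_apply]
    ext i j
    fin_cases i <;> fin_cases j <;>
      simp [Matrix.smul_apply, Complex.real_smul] <;> push_cast <;> ring

lemma det_X (x : Fin 4 → ℝ) :
    (X x).det = ((x 0 ^ 2 - x 1 ^ 2 - x 2 ^ 2 - x 3 ^ 2 : ℝ) : ℂ) := by
  rw [X_apply, Matrix.det_fin_two_of]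
  push_cast
  linear_combination ((x 2 : ℂ) ^ 2) * Complex.I_sq

lemma mulVec_ext {L L' : Matrix (Fin 4) (Fin 4) ℝ}
    (h : ∀ x, L *ᵥ x = L' *ᵥ x) : L = L' := by
  ext i j
  have := congrFun (h (Pi.single j 1)) i
  simpa [Matrix.mulVec_single] using this

lemma single_quad (S : Matrix (Fin 4) (Fin 4) ℝ) (i j : Fin 4) :
    Pi.single i 1 ⬝ᵥ (S *ᵥ Pi.single j 1) = S i j := by
  simp [Matrix.mulVec_single, single_dotProduct]

lemma sym_quad_ext {S T : Matrix (Fin 4) (Fin 4) ℝ} (hS : Sᵀ = S) (hT : Tᵀ = T)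
    (h : ∀ x, x ⬝ᵥ (S *ᵥ x) = x ⬝ᵥ (T *ᵥ x)) : S = T := by
  ext i j
  have hij := h (Pi.single i 1 + Pi.single j 1)
  have hi := h (Pi.single i 1)
  have hj := h (Pi.single j 1)
  simp only [Matrix.mulVec_add, add_dotProduct, dotProduct_add,
    single_quad] at hij hi hj
  have hSsym : S i j = S j i := by simpa using congrFun (congrFun hS j) i
  have hTsym : T i j = T j i := by simpa using congrFun (congrFun hT j) i
  linarith

/-- **The homomorphism from SL(2, ℂ) to the Lorentz group.**
(a) For every `A ∈ SL(2, ℂ)` there is a unique real `4 × 4` matrix `L_A` with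
`A (X x) Aᴴ = X (L_A x)` for all `x`; (b) any such `L_A` is a Lorentz transformation,
`L_Aᵀ η L_A = η`; and (c) the assignment `A ↦ L_A` is multiplicative. -/
theorem sl2C_to_lorentz :
    (∀ A : Matrix (Fin 2) (Fin 2) ℂ, A.det = 1 →
      ∃! L : Matrix (Fin 4) (Fin 4) ℝ, ∀ x : Fin 4 → ℝ, A * X x * Aᴴ = X (L *ᵥ x)) ∧
    (∀ A : Matrix (Fin 2) (Fin 2) ℂ, A.det = 1 →
      ∀ L : Matrix (Fin 4) (Fin 4) ℝ,
        (∀ x : Fin 4 → ℝ, A * X x * Aᴴ = X (L *ᵥ x)) → Lᵀ * η * L = η) ∧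
    (∀ A B : Matrix (Fin 2) (Fin 2) ℂ, A.det = 1 → B.det = 1 →
      ∀ LA LB LAB : Matrix (Fin 4) (Fin 4) ℝ,
        (∀ x : Fin 4 → ℝ, A * X x * Aᴴ = X (LA *ᵥ x)) →
        (∀ x : Fin 4 → ℝ, B * X x * Bᴴ = X (LB *ᵥ x)) →
        (∀ x : Fin 4 → ℝ, (A * B) * X x * (A * B)ᴴ = X (LAB *ᵥ x)) →
        LAB = LA * LB) := by
  -- existence of L for any A
  have herm : ∀ (A : Matrix (Fin 2) (Fin 2) ℂ) (v : Fin 4 → ℝ),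
      (A * X v * Aᴴ)ᴴ = A * X v * Aᴴ := by
    intro A v
    simp [Matrix.conjTranspose_mul, X_herm, Matrix.mul_assoc]
  have exL : ∀ A : Matrix (Fin 2) (Fin 2) ℂ,
      ∃ L : Matrix (Fin 4) (Fin 4) ℝ, ∀ x, A * X x * Aᴴ = X (L *ᵥ x) := by
    intro A
    refine ⟨Matrix.of fun i j => coords (A * X (Pi.single j 1) * Aᴴ) i, ?_⟩
    set L : Matrix (Fin 4) (Fin 4) ℝ :=
      Matrix.of fun i j => coords (A * X (Pi.single j 1) * Aᴴ) i with hLdef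
    -- both sides are linear in x; compare on basis
    let F : (Fin 4 → ℝ) →ₗ[ℝ] Matrix (Fin 2) (Fin 2) ℂ :=
      { toFun := fun x => A * X x * Aᴴ
        map_add' := fun x y => by
          have : X (x + y) = X x + X y := map_add Xl x y
          simp [this, mul_add, add_mul]
        map_smul' := fun c x => by
          have : X (c • x) = c • X x := map_smul Xl c x
          simp [this, Matrix.mul_smul, Matrix.smul_mul] }
    let G : (Fin 4 → ℝ) →ₗ[ℝ] Matrix (Fin 2) (Fin 2) ℂ :=
      Xl.comp L.mulVecLin
    have hFG : F = G := by
      apply Module.Basis.ext (Pi.basisFun ℝ (Fin 4))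
      intro j
      have hb : (Pi.basisFun ℝ (Fin 4)) j = Pi.single j 1 := by
        simp [Pi.basisFun_apply]
      rw [hb]
      show A * X (Pi.single j 1) * Aᴴ = X (L *ᵥ Pi.single j 1)
      have hcol : L *ᵥ Pi.single j 1 = coords (A * X (Pi.single j 1) * Aᴴ) := by
        funext i
        simp [Matrix.mulVec_single, hLdef]
      rw [hcol, X_coords _ (herm A _)]
    intro x
    exact congrFun (congrArg (fun f => f.toFun) hFG) x
  have uniq : ∀ (A : Matrix (Fin 2) (Fin 2) ℂ) (L L' : Matrix (Fin 4) (Fin 4) ℝ),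
      (∀ x, A * X x * Aᴴ = X (L *ᵥ x)) → (∀ x, A * X x * Aᴴ = X (L' *ᵥ x)) → L = L' := by
    intro A L L' h h'
    apply mulVec_ext
    intro x
    exact X_injective ((h x).symm.trans (h' x))
  refine ⟨fun A _ => ?_, fun A hA L hL => ?_, fun A B hA hB LA LB LAB hLA hLB hLAB => ?_⟩
  · obtain ⟨L, hL⟩ := exL A
    exact ⟨L, hL, fun L' hL' => uniq A L' L hL' hL⟩
  · -- Lorentz property
    have hdet : ∀ x : Fin 4 → ℝ,
        x 0 ^ 2 - x 1 ^ 2 - x 2 ^ 2 - x 3 ^ 2 =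
        (L *ᵥ x) 0 ^ 2 - (L *ᵥ x) 1 ^ 2 - (L *ᵥ x) 2 ^ 2 - (L *ᵥ x) 3 ^ 2 := by
      intro x
      have := congrArg Matrix.det (hL x)
      rw [Matrix.det_mul, Matrix.det_mul, Matrix.det_conjTranspose, hA,
        det_X, det_X] at this
      simp only [star_one, one_mul, mul_one] at this
      exact_mod_cast this
    have hq : ∀ x : Fin 4 → ℝ, x ⬝ᵥ ((Lᵀ * η * L) *ᵥ x) = x ⬝ᵥ (η *ᵥ x) := by
      intro x
      have hquad : ∀ y : Fin 4 → ℝ, y ⬝ᵥ (η *ᵥ y) = y 0 ^ 2 - y 1 ^ 2 - y 2 ^ 2 - y 3 ^ 2 := by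
        intro y
        simp [η, dotProduct, Matrix.mulVec, Fin.sum_univ_four, Matrix.diagonal]
        ring
      have hrw : x ⬝ᵥ ((Lᵀ * η * L) *ᵥ x) = (L *ᵥ x) ⬝ᵥ (η *ᵥ (L *ᵥ x)) := by
        rw [← Matrix.mulVec_mulVec, ← Matrix.mulVec_mulVec,
          Matrix.dotProduct_mulVec, Matrix.vecMul_transpose]
      rw [hrw, hquad, hquad, ← hdet x]
    have hηsym : ηᵀ = η := by
      simp [η, Matrix.diagonal_transpose]
    refine sym_quad_ext ?_ hηsym hq
    rw [Matrix.transpose_mul, Matrix.transpose_mul, Matrix.transpose_transpose, hηsym,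
      Matrix.mul_assoc]
  · -- multiplicativity
    apply mulVec_ext
    intro x
    have key : X (LAB *ᵥ x) = X ((LA * LB) *ᵥ x) := by
      rw [← hLAB x]
      rw [Matrix.conjTranspose_mul]
      calc A * B * X x * (Bᴴ * Aᴴ) = A * (B * X x * Bᴴ) * Aᴴ := by
            noncomm_ring
        _ = A * X (LB *ᵥ x) * Aᴴ := by rw [hLB x]
        _ = X (LA *ᵥ (LB *ᵥ x)) := hLA _
        _ = X ((LA * LB) *ᵥ x) := by rw [Matrix.mulVec_mulVec]
    exact X_injective key
end
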